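/- Let μ ∈ ℂ. For every integer k ≥ 1 and every x ∈ ℂ, the k-th derivative of the entire function x ↦ F(μ;q,x) satisfies F^{(k)}(μ;q,x) = (−1)^k·(q^μ;q)_k·F(μ+k; q, x). -/

import Mathlib

/-- `(a;c)_n = ∏_{j=0}^{n-1} (1 - a c^j)`. -/
noncomputable def qPoch (a c : ℂ) (n : ℕ) : ℂ := ∏ j ∈ Finset.range n, (1 - a * c ^ j)

/-- `(a;c)_∞ = ∏_{j=0}^{∞} (1 - a c^j)`. -/
noncomputable def qPochInf (a c : ℂ) : ℂ := ∏' j : ℕ, (1 - a * c ^ j)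

/-- `q^μ := exp (μ log q)` for real `q > 0` and complex `μ`. -/
noncomputable def qpow (q : ℝ) (μ : ℂ) : ℂ := Complex.exp (μ * Real.log q)

/-- `F(μ;q,x) = Σ_{n≥0} ((q^μ;q)_n / n!) (-x)^n`. -/
noncomputable def F (μ : ℂ) (q : ℝ) (x : ℂ) : ℂ :=
  ∑' n : ℕ, qPoch (qpow q μ) (q : ℂ) n / (Nat.factorial n : ℂ) * (-x) ^ n

/-- `(a)_n = a (a+1) ⋯ (a+n-1)`. -/
noncomputable def poch (a : ℂ) (n : ℕ) : ℂ := ∏ j ∈ Finset.range n, (a + (j : ℂ))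

/-- `G(a;q,x) = Σ_{n≥0} ((a)_n q^{n(n+1)/2} / (q;q)_n) (-x)^n`. -/
noncomputable def G (a : ℂ) (q : ℝ) (x : ℂ) : ℂ :=
  ∑' n : ℕ, poch a n * (q : ℂ) ^ (n * (n + 1) / 2) / qPoch (q : ℂ) (q : ℂ) n * (-x) ^ n

lemma qPoch_succ' (a c : ℂ) (n : ℕ) :
    qPoch a c (n + 1) = (1 - a) * qPoch (a * c) c n := by
  unfold qPoch
  rw [Finset.prod_range_succ']
  simp only [pow_zero, mul_one]
  rw [mul_comm]
  congr 1
  exact Finset.prod_congr rfl fun j _ => by ring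

lemma qpow_add_one (q : ℝ) (hq : 0 < q) (μ : ℂ) :
    qpow q (μ + 1) = qpow q μ * q := by
  unfold qpow
  rw [add_mul, one_mul, Complex.exp_add]
  congr 1
  rw [← Complex.ofReal_exp, Real.exp_log hq]

lemma qPoch_norm_le (a : ℂ) (q : ℝ) (hq0 : 0 ≤ q) (hq1 : q ≤ 1) (n : ℕ) :
    ‖qPoch a (q : ℂ) n‖ ≤ (1 + ‖a‖) ^ n := by
  unfold qPoch
  rw [norm_prod]
  calc ∏ j ∈ Finset.range n, ‖1 - a * (q:ℂ) ^ j‖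
      ≤ ∏ j ∈ Finset.range n, (1 + ‖a‖) := by
        refine Finset.prod_le_prod (fun j _ => norm_nonneg _) (fun j _ => ?_)
        calc ‖1 - a * (q:ℂ) ^ j‖ ≤ ‖(1:ℂ)‖ + ‖a * (q:ℂ) ^ j‖ := norm_sub_le _ _
          _ = 1 + ‖a‖ * q ^ j := by
              simp [norm_mul, norm_pow, Complex.norm_real, abs_of_nonneg hq0]
          _ ≤ 1 + ‖a‖ * 1 := by gcongr; exact pow_le_one₀ hq0 hq1
          _ = 1 + ‖a‖ := by ring
    _ = (1 + ‖a‖) ^ n := by rw [Finset.prod_const, Finset.card_range]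

/-- coefficient of `F μ q` -/
noncomputable def Fc (μ : ℂ) (q : ℝ) (n : ℕ) : ℂ :=
  qPoch (qpow q μ) (q : ℂ) n / (Nat.factorial n : ℂ) * (-1) ^ n

lemma Fc_norm_le (μ : ℂ) (q : ℝ) (hq0 : 0 ≤ q) (hq1 : q ≤ 1) (n : ℕ) :
    ‖Fc μ q n‖ ≤ (1 + ‖qpow q μ‖) ^ n / (Nat.factorial n : ℝ) := by
  unfold Fc
  rw [norm_mul, norm_pow, norm_neg, norm_one, one_pow, mul_one, norm_div,
    Complex.norm_natCast]
  gcongr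
  exact qPoch_norm_le _ _ hq0 hq1 n

lemma F_eq_tsum (μ : ℂ) (q : ℝ) (x : ℂ) :
    F μ q x = ∑' n : ℕ, Fc μ q n * x ^ n := by
  unfold F Fc
  exact tsum_congr fun n => by rw [neg_pow]; ring

lemma summable_Fc (μ : ℂ) (q : ℝ) (hq0 : 0 ≤ q) (hq1 : q ≤ 1) (y : ℂ) :
    Summable fun n : ℕ => Fc μ q n * y ^ n := by
  refine Summable.of_norm_bounded
    (Real.summable_pow_div_factorial ((1 + ‖qpow q μ‖) * ‖y‖)) fun n => ?_
  rw [norm_mul, norm_pow, mul_pow]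
  calc ‖Fc μ q n‖ * ‖y‖ ^ n
      ≤ ((1 + ‖qpow q μ‖) ^ n / (Nat.factorial n : ℝ)) * ‖y‖ ^ n := by
        gcongr; exact Fc_norm_le μ q hq0 hq1 n
    _ = (1 + ‖qpow q μ‖) ^ n * ‖y‖ ^ n / (Nat.factorial n : ℝ) := by ring

lemma summable_deriv_bound (A : ℝ) :
    Summable fun n : ℕ => (n : ℝ) * A ^ n / (Nat.factorial n : ℝ) := by
  refine Summable.of_norm_bounded
    (Real.summable_pow_div_factorial (2 * |A|)) fun n => ?_
  rw [Real.norm_eq_abs, abs_div, Nat.abs_cast, abs_mul, Nat.abs_cast, abs_pow, mul_pow]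
  gcongr
  exact_mod_cast (Nat.lt_two_pow_self (n := n)).le

lemma Fc_succ (μ : ℂ) (q : ℝ) (hq : 0 < q) (n : ℕ) :
    Fc μ q (n + 1) * ((n : ℂ) + 1) = -(1 - qpow q μ) * Fc (μ + 1) q n := by
  unfold Fc
  rw [qPoch_succ', qpow_add_one q hq, Nat.factorial_succ]
  have h1 : ((Nat.factorial n : ℂ)) ≠ 0 := Nat.cast_ne_zero.mpr (Nat.factorial_ne_zero n)
  have h2 : ((n : ℂ) + 1) ≠ 0 := Nat.cast_add_one_ne_zero n
  push_cast
  field_simp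
  ring

lemma F_hasDerivAt (q : ℝ) (hq0 : 0 < q) (hq1 : q < 1) (μ : ℂ) (x : ℂ) :
    HasDerivAt (F μ q) (-(1 - qpow q μ) * F (μ + 1) q x) x := by
  set a := qpow q μ with ha
  set R : ℝ := ‖x‖ + 1 with hR
  have hR1 : (1 : ℝ) ≤ R := by simp [hR]
  set u : ℕ → ℝ := fun n => (n : ℝ) * ((1 + ‖a‖) * R) ^ n / (Nat.factorial n : ℝ) with hu
  have hbound : ∀ (n : ℕ) (y : ℂ), y ∈ Metric.ball (0 : ℂ) R →
      ‖Fc μ q n * ((n : ℂ) * y ^ (n - 1))‖ ≤ u n := by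
    intro n y hy
    have hyR : ‖y‖ ≤ R := (mem_ball_zero_iff.mp hy).le
    rw [norm_mul, norm_mul, norm_pow, Complex.norm_natCast]
    have h1 : ‖y‖ ^ (n - 1) ≤ R ^ n := by
      calc ‖y‖ ^ (n - 1) ≤ R ^ (n - 1) := by gcongr
        _ ≤ R ^ n := pow_le_pow_right₀ hR1 (Nat.sub_le n 1)
    calc ‖Fc μ q n‖ * ((n : ℝ) * ‖y‖ ^ (n - 1))
        ≤ ((1 + ‖a‖) ^ n / (Nat.factorial n : ℝ)) * ((n : ℝ) * R ^ n) := by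
          gcongr
          exact Fc_norm_le μ q hq0.le hq1.le n
      _ = u n := by rw [hu]; simp only [mul_pow]; ring
  have key : HasDerivAt (fun z : ℂ => ∑' n : ℕ, Fc μ q n * z ^ n)
      (∑' n : ℕ, Fc μ q n * ((n : ℂ) * x ^ (n - 1))) x := by
    refine hasDerivAt_tsum_of_isPreconnected (y₀ := (0:ℂ)) (summable_deriv_bound ((1 + ‖a‖) * R))
      Metric.isOpen_ball (convex_ball (0:ℂ) R).isPreconnected
      (fun n y _ => ((hasDerivAt_pow n y).const_mul (Fc μ q n))) hbound
      (mem_ball_zero_iff.mpr (by simpa using lt_of_lt_of_le one_pos hR1)) ?_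
      (mem_ball_zero_iff.mpr (by simp [hR]))
    exact summable_Fc μ q hq0.le hq1.le 0
  have hF : (fun z : ℂ => ∑' n : ℕ, Fc μ q n * z ^ n) = F μ q := by
    funext z; rw [F_eq_tsum]
  rw [hF] at key
  convert key using 1
  have hsum : Summable fun n : ℕ => Fc μ q n * ((n : ℂ) * x ^ (n - 1)) := by
    refine Summable.of_norm_bounded (summable_deriv_bound ((1 + ‖a‖) * R)) fun n => ?_
    exact hbound n x (mem_ball_zero_iff.mpr (by simp [hR]))
  rw [hsum.tsum_eq_zero_add]
  simp only [Nat.cast_zero, zero_mul, mul_zero, zero_add]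
  have : ∀ n : ℕ, Fc μ q (n + 1) * ((((n + 1 : ℕ)) : ℂ) * x ^ (n + 1 - 1)) =
      -(1 - a) * (Fc (μ + 1) q n * x ^ n) := by
    intro n
    have := Fc_succ μ q hq0 n
    calc Fc μ q (n + 1) * ((((n + 1 : ℕ)) : ℂ) * x ^ (n + 1 - 1))
        = (Fc μ q (n + 1) * ((n : ℂ) + 1)) * x ^ n := by push_cast; ring
      _ = (-(1 - a) * Fc (μ + 1) q n) * x ^ n := by rw [this]
      _ = -(1 - a) * (Fc (μ + 1) q n * x ^ n) := by ring
  rw [tsum_congr this, tsum_mul_left, F_eq_tsum]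

lemma iteratedDeriv_const_mul' (n : ℕ) (c : ℂ) (f : ℂ → ℂ) :
    iteratedDeriv n (fun x => c * f x) = fun x => c * iteratedDeriv n f x := by
  induction n with
  | zero => simp [iteratedDeriv_zero]
  | succ n ih =>
    funext x
    rw [iteratedDeriv_succ, ih, iteratedDeriv_succ]
    exact deriv_const_mul_field c


/-- `∂_x^k F(μ;q,x) = (-1)^k (q^μ;q)_k F(μ+k;q,x)` for every `k ≥ 1`. -/
theorem stmt7 (q : ℝ) (hq0 : 0 < q) (hq1 : q < 1)
    (μ : ℂ) (k : ℕ) (hk : 1 ≤ k) (x : ℂ) :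
    iteratedDeriv k (F μ q) x =
      (-1 : ℂ) ^ k * qPoch (qpow q μ) (q : ℂ) k * F (μ + (k : ℂ)) q x := by
  clear hk
  induction k generalizing μ x with
  | zero => simp [qPoch]
  | succ k ih =>
    rw [iteratedDeriv_succ']
    have hd : deriv (F μ q) = fun y => -(1 - qpow q μ) * F (μ + 1) q y := by
      funext y; exact (F_hasDerivAt q hq0 hq1 μ y).deriv
    rw [hd, iteratedDeriv_const_mul']
    beta_reduce
    rw [ih (μ + 1) x]
    have harg : μ + 1 + (k : ℂ) = μ + ((k : ℕ) + 1 : ℂ) := by push_cast; ring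
    rw [harg]
    rw [qPoch_succ', ← qpow_add_one q hq0]
    push_cast
    ring
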